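/- Let M ∈ ℤ^{d×d} be regular, m := |det M|, C⁰ a positive definite reference stiffness with the usual symmetries, and let f := m^{−1/2} D_M be the normalized Dirichlet kernel. Then the periodised Green symbol coincides with the Green operator symbol on the generating set: Γ̂^p_h = m Σ_{z∈ℤ^d} Γ̂⁰_{h+M^Tz} |c_{h+M^Tz}(f)|² = Γ̂⁰_h for every h ∈ G(M^T). Hence the truncated-Fourier-series (Moulinec–Suquet) discretisation with Γ⁰ is the special case of the periodised Green operator for Dirichlet kernel translates. -/

import Mathlib

open MeasureTheory Complex Matrix
open scoped BigOperators Classical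

noncomputable section

namespace ElastFFT

variable (d : ℕ)

/-- Real action of an integer matrix on a real vector. -/
def mulVecR (M : Matrix (Fin d) (Fin d) ℤ) (y : Fin d → ℝ) : Fin d → ℝ :=
  (M.map (Int.cast : ℤ → ℝ)).mulVec y

/-- The lattice Λ(M) = M⁻¹ ℤ^d. -/
def lattice (M : Matrix (Fin d) (Fin d) ℤ) : Set (Fin d → ℝ) :=
  {y | ∃ z : Fin d → ℤ, mulVecR d M y = fun i => (z i : ℝ)}

/-- The pattern P(M) = Λ(M) ∩ [-1/2, 1/2)^d. -/
def pattern (M : Matrix (Fin d) (Fin d) ℤ) : Set (Fin d → ℝ) :=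
  {y | y ∈ lattice d M ∧ ∀ i, y i ∈ Set.Ico (-(1/2) : ℝ) (1/2)}

/-- The generating set G(N) = ℤ^d ∩ N·[-1/2,1/2)^d. -/
def genSet (N : Matrix (Fin d) (Fin d) ℤ) : Set (Fin d → ℤ) :=
  {h | ∃ y : Fin d → ℝ, (∀ i, y i ∈ Set.Ico (-(1/2) : ℝ) (1/2)) ∧
        (fun i => (h i : ℝ)) = mulVecR d N y}

/-- The fundamental cell [-π, π)^d of the torus. -/
def cube : Set (Fin d → ℝ) := Set.univ.pi fun _ => Set.Ico (-Real.pi) Real.pi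

/-- Pairing of an integer frequency and a real point. -/
def dot (k : Fin d → ℤ) (x : Fin d → ℝ) : ℝ := ∑ i, (k i : ℝ) * x i

/-- A function on the torus: 2π-periodic in each coordinate. -/
def TorusFun (f : (Fin d → ℝ) → ℂ) : Prop :=
  ∀ (x : Fin d → ℝ) (z : Fin d → ℤ), f (x + fun i => 2 * Real.pi * (z i : ℝ)) = f x

/-- The L²(𝕋^d) inner product (normalised). -/
def torusInner (f g : (Fin d → ℝ) → ℂ) : ℂ :=
  (((2 * Real.pi) ^ d : ℝ) : ℂ)⁻¹ * ∫ x in cube d, f x * (starRingEnd ℂ) (g x)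

/-- Fourier coefficient c_k(f). -/
def fCoeff (f : (Fin d → ℝ) → ℂ) (k : Fin d → ℤ) : ℂ :=
  torusInner d f fun x => Complex.exp (Complex.I * (dot d k x : ℝ))

/-- Membership in the Wiener algebra A(𝕋^d). -/
def InWiener (f : (Fin d → ℝ) → ℂ) : Prop :=
  Summable (fun k : Fin d → ℤ => ‖fCoeff d f k‖) ∧
    ∀ x, HasSum (fun k : Fin d → ℤ =>
      fCoeff d f k * Complex.exp (Complex.I * (dot d k x : ℝ))) (f x)

/-- The translate T(y)f = f(· - 2πy). -/
def Tr (y : Fin d → ℝ) (f : (Fin d → ℝ) → ℂ) : (Fin d → ℝ) → ℂ :=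
  fun x => f (x - (2 * Real.pi) • y)

/-- The space of translates V_M^f, as a set of L² functions (a.e. equality on the cube). -/
def spanTranslates (M : Matrix (Fin d) (Fin d) ℤ) (f : (Fin d → ℝ) → ℂ) :
    Set ((Fin d → ℝ) → ℂ) :=
  {g | ∃ a : (Fin d → ℝ) → ℂ,
      g =ᵐ[volume.restrict (cube d)] fun x => ∑ᶠ y ∈ pattern d M, a y * Tr d y f x}

/-- Orthonormality of the translates of f on the pattern. -/
def OrthonormalTranslates (M : Matrix (Fin d) (Fin d) ℤ) (f : (Fin d → ℝ) → ℂ) : Prop :=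
  ∀ y ∈ pattern d M, ∀ y' ∈ pattern d M,
    torusInner d (Tr d y f) (Tr d y' f) = if y = y' then 1 else 0

/-- A fundamental interpolant of V_M^f. -/
def IsFundamentalInterpolant (M : Matrix (Fin d) (Fin d) ℤ) (f Λ : (Fin d → ℝ) → ℂ) : Prop :=
  Λ ∈ spanTranslates d M f ∧
    ∀ y ∈ pattern d M,
      Λ ((2 * Real.pi) • y) = if ∃ z : Fin d → ℤ, y = fun i => (z i : ℝ) then 1 else 0

/-- Frobenius inner product of complex matrices. -/
def frobInner (A B : Matrix (Fin d) (Fin d) ℂ) : ℂ :=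
  ∑ i, ∑ j, A i j * (starRingEnd ℂ) (B i j)

/-- Application of a fourth-order (real) tensor to a complex matrix. -/
def capply (C : Fin d → Fin d → Fin d → Fin d → ℝ) (γ : Matrix (Fin d) (Fin d) ℂ) :
    Matrix (Fin d) (Fin d) ℂ :=
  Matrix.of fun i j => ∑ a, ∑ b, (C i j a b : ℂ) * γ a b

/-- The usual symmetries of a stiffness tensor. -/
def TensorSymm (C : Fin d → Fin d → Fin d → Fin d → ℝ) : Prop :=
  ∀ i j k l, C i j k l = C j i k l ∧ C i j k l = C i j l k ∧ C i j k l = C k l i j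

/-- Positive definiteness of a reference stiffness on symmetric matrices. -/
def TensorPosDef (C : Fin d → Fin d → Fin d → Fin d → ℝ) : Prop :=
  ∃ c : ℝ, 0 < c ∧ ∀ γ : Matrix (Fin d) (Fin d) ℂ, γ.IsSymm →
    c * ∑ i, ∑ j, Complex.normSq (γ i j) ≤ (frobInner d (capply d C γ) γ).re

/-- The symmetrised gradient D_k u = (i/2)(k uᵀ + u kᵀ). -/
def symGrad (k : Fin d → ℝ) (u : Fin d → ℂ) : Matrix (Fin d) (Fin d) ℂ :=
  Matrix.of fun i j => (Complex.I / 2) * ((k i : ℂ) * u j + u i * (k j : ℂ))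

/-- The adjoint D_k* of the symmetrised gradient (w.r.t. Frobenius inner product). -/
def symGradAdj (k : Fin d → ℝ) (A : Matrix (Fin d) (Fin d) ℂ) : Fin d → ℂ :=
  fun j => ∑ i, (-Complex.I / 2) * (k i : ℂ) * (A i j + A j i)

/-- The acoustic tensor A(k) = D_k* ∘ C⁰ ∘ D_k as a d×d complex matrix. -/
def acoustic (C0 : Fin d → Fin d → Fin d → Fin d → ℝ) (k : Fin d → ℝ) :
    Matrix (Fin d) (Fin d) ℂ :=
  Matrix.of fun i j => symGradAdj d k (capply d C0 (symGrad d k (Pi.single j 1))) i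

/-- The Green operator symbol Γ̂⁰_k = D_k ∘ A(k)⁻¹ ∘ D_k* for real k ≠ 0. -/
def greenSymR (C0 : Fin d → Fin d → Fin d → Fin d → ℝ) (k : Fin d → ℝ)
    (E : Matrix (Fin d) (Fin d) ℂ) : Matrix (Fin d) (Fin d) ℂ :=
  symGrad d k ((acoustic d C0 k)⁻¹.mulVec (symGradAdj d k E))

/-- The Green operator symbol for integer frequencies, Γ̂⁰_0 := 0. -/
def greenSymZ (C0 : Fin d → Fin d → Fin d → Fin d → ℝ) (k : Fin d → ℤ)
    (E : Matrix (Fin d) (Fin d) ℂ) : Matrix (Fin d) (Fin d) ℂ :=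
  if k = 0 then 0 else greenSymR d C0 (fun i => (k i : ℝ)) E

/-- Entrywise Fourier coefficient of a matrix field. -/
def mFourier (ε : (Fin d → ℝ) → Matrix (Fin d) (Fin d) ℂ) (k : Fin d → ℤ) :
    Matrix (Fin d) (Fin d) ℂ :=
  Matrix.of fun i j => fCoeff d (fun x => ε x i j) k

/-- The periodised Green symbol Γ̂^p_h = m Σ_z Γ̂⁰_{h+Mᵀz} |c_{h+Mᵀz}(f)|². -/
def gammaPSym (M : Matrix (Fin d) (Fin d) ℤ) (C0 : Fin d → Fin d → Fin d → Fin d → ℝ)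
    (f : (Fin d → ℝ) → ℂ) (h : Fin d → ℤ) (E : Matrix (Fin d) (Fin d) ℂ) :
    Matrix (Fin d) (Fin d) ℂ :=
  (M.det.natAbs : ℂ) • ∑' z : Fin d → ℤ,
    ((Complex.normSq (fCoeff d f (h + Matrix.mulVec Mᵀ z)) : ℝ) : ℂ) •
      greenSymZ d C0 (h + Matrix.mulVec Mᵀ z) E

/-- The periodised Green operator applied to a coefficient field: DFT, multiply, inverse DFT. -/
def gammaP (M : Matrix (Fin d) (Fin d) ℤ) (C0 : Fin d → Fin d → Fin d → Fin d → ℝ)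
    (f : (Fin d → ℝ) → ℂ) (V : (Fin d → ℝ) → Matrix (Fin d) (Fin d) ℂ)
    (x : Fin d → ℝ) : Matrix (Fin d) (Fin d) ℂ :=
  ((M.det.natAbs : ℂ))⁻¹ • ∑ᶠ h ∈ genSet d Mᵀ,
    Complex.exp (2 * Real.pi * Complex.I * (dot d h x : ℝ)) •
      gammaPSym d M C0 f h
        (∑ᶠ y ∈ pattern d M, Complex.exp (-(2 * Real.pi * Complex.I) * (dot d h y : ℝ)) • V y)

/-- The Dirichlet kernel D_M. -/
def dirichlet (M : Matrix (Fin d) (Fin d) ℤ) : (Fin d → ℝ) → ℂ :=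
  fun x => ∑ᶠ h ∈ genSet d Mᵀ, Complex.exp (Complex.I * (dot d h x : ℝ))



namespace ElastFFTProofAux

open ElastFFT Set

lemma dot_sub (d : ℕ) (h k : Fin d → ℤ) (x : Fin d → ℝ) :
    dot d (h - k) x = dot d h x - dot d k x := by
  simp [dot, sub_mul, Finset.sum_sub_distrib]

lemma cube_measurable (d : ℕ) : MeasurableSet (cube d) :=
  MeasurableSet.univ_pi fun _ => measurableSet_Ico

lemma intExp (d : ℕ) (k : Fin d → ℤ) :
    MeasureTheory.IntegrableOn
      (fun x : Fin d → ℝ => Complex.exp (Complex.I * ((dot d k x : ℝ) : ℂ)))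
      (cube d) MeasureTheory.volume := by
  have hdot : Continuous fun x : Fin d → ℝ => dot d k x := by
    refine continuous_finset_sum _ fun i _ => ?_
    exact continuous_const.mul (continuous_apply i)
  have hc : Continuous fun x : Fin d → ℝ =>
      Complex.exp (Complex.I * ((dot d k x : ℝ) : ℂ)) :=
    Complex.continuous_exp.comp (continuous_const.mul (Complex.continuous_ofReal.comp hdot))
  have hK : IsCompact (Set.univ.pi fun _ : Fin d => Set.Icc (-Real.pi) Real.pi) :=
    isCompact_univ_pi fun _ => isCompact_Icc
  exact (hc.continuousOn.integrableOn_compact hK).mono_set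
    (Set.pi_mono fun i _ => Set.Ico_subset_Icc_self)

lemma exp_ortho_one (n : ℤ) :
    (∫ t in Set.Ico (-Real.pi) Real.pi, Complex.exp (Complex.I * (n : ℂ) * (t : ℂ))) =
      if n = 0 then ((2 * Real.pi : ℝ) : ℂ) else 0 := by
  rcases eq_or_ne n 0 with hn | hn
  · rw [if_pos hn]
    simp only [hn, Int.cast_zero, mul_zero, zero_mul, Complex.exp_zero]
    rw [MeasureTheory.setIntegral_const]
    rw [Real.volume_real_Ico_of_le (by linarith [Real.pi_pos])]
    rw [Complex.real_smul, mul_one]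
    push_cast
    try ring
  · rw [if_neg hn]
    have hle : -Real.pi ≤ Real.pi := by linarith [Real.pi_pos]
    have h1 : (∫ t in Set.Ico (-Real.pi) Real.pi,
        Complex.exp (Complex.I * (n : ℂ) * (t : ℂ)))
        = ∫ t in (-Real.pi)..(Real.pi), Complex.exp ((Complex.I * (n : ℂ)) * (t : ℂ)) := by
      rw [intervalIntegral.integral_of_le hle,
        MeasureTheory.integral_Ioc_eq_integral_Ioo,
        MeasureTheory.integral_Ico_eq_integral_Ioo]
    rw [h1, integral_exp_mul_complex
      (mul_ne_zero Complex.I_ne_zero (Int.cast_ne_zero.mpr hn))]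
    have e1 : Complex.I * (n : ℂ) * ((Real.pi : ℝ) : ℂ) = (n : ℂ) * ((Real.pi : ℂ) * Complex.I) := by
      ring
    have e2 : Complex.I * (n : ℂ) * ((-Real.pi : ℝ) : ℂ) = ((-n : ℤ) : ℂ) * ((Real.pi : ℂ) * Complex.I) := by
      push_cast; ring
    rw [e1, e2, Complex.exp_int_mul, Complex.exp_int_mul, Complex.exp_pi_mul_I]
    have : ((-1 : ℂ)) ^ (-n) = (-1 : ℂ) ^ n := by
      rw [_root_.zpow_neg, ← _root_.inv_zpow, inv_neg, inv_one]
    rw [this, sub_self, zero_div]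

lemma exp_ortho (d : ℕ) (k : Fin d → ℤ) :
    (∫ x in cube d, Complex.exp (Complex.I * ((dot d k x : ℝ) : ℂ))) =
      if k = 0 then (((2 * Real.pi) ^ d : ℝ) : ℂ) else 0 := by
  classical
  have hrw : ∀ x : Fin d → ℝ, Complex.exp (Complex.I * ((dot d k x : ℝ) : ℂ))
      = ∏ i, Complex.exp (Complex.I * (k i : ℂ) * (x i : ℂ)) := by
    intro x
    rw [← Complex.exp_sum]
    congr 1
    simp only [dot]
    push_cast
    rw [Finset.mul_sum]
    exact Finset.sum_congr rfl fun i _ => by ring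
  simp only [hrw]
  rw [← MeasureTheory.integral_indicator (cube_measurable d)]
  have hind : (cube d).indicator
      (fun x : Fin d → ℝ => ∏ i, Complex.exp (Complex.I * (k i : ℂ) * (x i : ℂ)))
      = fun x : Fin d → ℝ => ∏ i, (Set.Ico (-Real.pi) Real.pi).indicator
          (fun t : ℝ => Complex.exp (Complex.I * (k i : ℂ) * (t : ℂ))) (x i) := by
    funext x
    by_cases hx : x ∈ cube d
    · rw [Set.indicator_of_mem hx]
      refine Finset.prod_congr rfl fun i _ => ?_
      exact (Set.indicator_of_mem
        (show x i ∈ Set.Ico (-Real.pi) Real.pi from hx i (Set.mem_univ i))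
        (fun t : ℝ => Complex.exp (Complex.I * (k i : ℂ) * (t : ℂ)))).symm
    · rw [Set.indicator_of_notMem hx]
      have : ∃ i, x i ∉ Set.Ico (-Real.pi) Real.pi := by
        by_contra hcon
        push_neg at hcon
        exact hx fun i _ => hcon i
      obtain ⟨i, hi⟩ := this
      exact (Finset.prod_eq_zero (Finset.mem_univ i) (Set.indicator_of_notMem hi _)).symm
  rw [hind]
  beta_reduce
  rw [MeasureTheory.integral_fintype_prod_volume_eq_prod (ι := Fin d)
    (fun i => (Set.Ico (-Real.pi) Real.pi).indicator
      (fun t : ℝ => Complex.exp (Complex.I * (k i : ℂ) * (t : ℂ))))]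
  have hfac : ∀ i : Fin d, (∫ t : ℝ, (Set.Ico (-Real.pi) Real.pi).indicator
      (fun t : ℝ => Complex.exp (Complex.I * (k i : ℂ) * (t : ℂ))) t)
      = if k i = 0 then ((2 * Real.pi : ℝ) : ℂ) else 0 := by
    intro i
    rw [MeasureTheory.integral_indicator measurableSet_Ico]
    exact exp_ortho_one (k i)
  rw [Finset.prod_congr rfl fun i _ => hfac i]
  by_cases hk : k = 0
  · rw [if_pos hk]
    have : ∀ i : Fin d, k i = 0 := fun i => by rw [hk]; rfl
    simp only [this, if_true]
    rw [Finset.prod_const]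
    push_cast
    simp
  · rw [if_neg hk]
    have : ∃ i, k i ≠ 0 := by
      by_contra hcon
      push_neg at hcon
      exact hk (funext hcon)
    obtain ⟨i, hi⟩ := this
    exact Finset.prod_eq_zero (Finset.mem_univ i) (if_neg hi)

lemma genSet_finite (d : ℕ) (N : Matrix (Fin d) (Fin d) ℤ) : (genSet d N).Finite := by
  classical
  set B : ℤ := ∑ i, ∑ j, |N i j| with hB
  refine Set.Finite.subset (Set.Finite.pi fun _ : Fin d => Set.finite_Icc (-B) B) ?_
  rintro h ⟨y, hy, hEq⟩
  intro i _
  have h1 : (h i : ℝ) = ∑ j, (N i j : ℝ) * y j := by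
    have := congrFun hEq i
    simpa [mulVecR, Matrix.mulVec, dotProduct, Matrix.map_apply] using this
  have hBnn : ∀ i' : Fin d, (0 : ℝ) ≤ ∑ j, |(N i' j : ℝ)| :=
    fun i' => Finset.sum_nonneg fun j _ => abs_nonneg _
  have h2 : |(h i : ℝ)| ≤ (B : ℝ) := by
    rw [h1]
    calc |∑ j, (N i j : ℝ) * y j| ≤ ∑ j, |(N i j : ℝ) * y j| :=
          Finset.abs_sum_le_sum_abs _ _
      _ ≤ ∑ j, |(N i j : ℝ)| := by
          refine Finset.sum_le_sum fun j _ => ?_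
          rw [abs_mul]
          have hyj : |y j| ≤ 1 := by
            obtain ⟨a, b⟩ := hy j
            rw [abs_le]
            constructor <;> linarith
          exact mul_le_of_le_one_right (abs_nonneg _) hyj
      _ ≤ (B : ℝ) := by
          rw [hB]
          push_cast
          exact Finset.single_le_sum (fun i' _ => hBnn i') (Finset.mem_univ i)
  obtain ⟨ha, hb⟩ := abs_le.mp h2
  constructor
  · exact_mod_cast ha
  · exact_mod_cast hb

lemma fCoeff_const_mul (d : ℕ) (c : ℂ) (g : (Fin d → ℝ) → ℂ) (k : Fin d → ℤ) :
    fCoeff d (fun x => c * g x) k = c * fCoeff d g k := by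
  simp only [fCoeff, torusInner]
  rw [show (fun x => (c * g x) *
      (starRingEnd ℂ) (Complex.exp (Complex.I * ((dot d k x : ℝ) : ℂ))))
      = fun x => c * (g x *
      (starRingEnd ℂ) (Complex.exp (Complex.I * ((dot d k x : ℝ) : ℂ)))) from
    funext fun x => by ring]
  rw [MeasureTheory.integral_const_mul]
  ring

lemma fCoeff_dirichlet (d : ℕ) (M : Matrix (Fin d) (Fin d) ℤ) (k : Fin d → ℤ) :
    fCoeff d (dirichlet d M) k = if k ∈ genSet d Mᵀ then 1 else 0 := by
  classical
  have hfin := genSet_finite d Mᵀ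
  simp only [fCoeff, torusInner]
  have hintegrand : (fun x => dirichlet d M x *
      (starRingEnd ℂ) (Complex.exp (Complex.I * ((dot d k x : ℝ) : ℂ))))
      = fun x => ∑ h ∈ hfin.toFinset,
          Complex.exp (Complex.I * ((dot d (h - k) x : ℝ) : ℂ)) := by
    funext x
    have hconj : (starRingEnd ℂ) (Complex.exp (Complex.I * ((dot d k x : ℝ) : ℂ)))
        = Complex.exp (-(Complex.I * ((dot d k x : ℝ) : ℂ))) := by
      rw [← Complex.exp_conj]
      congr 1
      simp [Complex.conj_I, Complex.conj_ofReal]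
    rw [hconj, show dirichlet d M x = ∑ h ∈ hfin.toFinset,
        Complex.exp (Complex.I * ((dot d h x : ℝ) : ℂ)) from
      finsum_mem_eq_finite_toFinset_sum _ hfin, Finset.sum_mul]
    refine Finset.sum_congr rfl fun h _ => ?_
    rw [← Complex.exp_add]
    congr 1
    rw [dot_sub]
    push_cast
    ring
  rw [hintegrand, MeasureTheory.integral_finset_sum _ fun h _ => intExp d (h - k)]
  rw [Finset.sum_congr rfl fun h _ => exp_ortho d (h - k)]
  have hsum : (∑ h ∈ hfin.toFinset,
      if h - k = 0 then (((2 * Real.pi) ^ d : ℝ) : ℂ) else 0)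
      = if k ∈ hfin.toFinset then (((2 * Real.pi) ^ d : ℝ) : ℂ) else 0 := by
    simp only [sub_eq_zero]
    exact Finset.sum_ite_eq' hfin.toFinset k fun _ => (((2 * Real.pi) ^ d : ℝ) : ℂ)
  rw [hsum]
  simp only [Set.Finite.mem_toFinset]
  have hne : (((2 * Real.pi) ^ d : ℝ) : ℂ) ≠ 0 := by
    have : (0 : ℝ) < (2 * Real.pi) ^ d := by positivity
    exact_mod_cast ne_of_gt this
  split
  · rw [inv_mul_cancel₀ hne]
  · rw [mul_zero]

lemma genSet_add_notMem (d : ℕ) (M : Matrix (Fin d) (Fin d) ℤ) (hM : M.det ≠ 0)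
    {h z : Fin d → ℤ} (hh : h ∈ genSet d Mᵀ) (hz : z ≠ 0) :
    h + Matrix.mulVec Mᵀ z ∉ genSet d Mᵀ := by
  classical
  rintro ⟨y', hy', hEq'⟩
  obtain ⟨y, hy, hEq⟩ := hh
  set A : Matrix (Fin d) (Fin d) ℝ := Mᵀ.map (Int.cast : ℤ → ℝ) with hA
  have hdetA : A.det ≠ 0 := by
    have hmap : A.det = ((Mᵀ.det : ℤ) : ℝ) := by
      rw [show A = (Int.castRingHom ℝ).mapMatrix Mᵀ from rfl, ← RingHom.map_det]
      simp
    rw [hmap, Matrix.det_transpose]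
    exact_mod_cast hM
  have hcast : (fun i => (((h + Matrix.mulVec Mᵀ z) i : ℤ) : ℝ))
      = fun i => ((h i : ℤ) : ℝ) + A.mulVec (fun j => ((z j : ℤ) : ℝ)) i := by
    funext i
    simp only [Pi.add_apply, Matrix.mulVec, dotProduct, Matrix.map_apply, hA]
    push_cast
    ring
  have key : A.mulVec y' = A.mulVec (y + fun i => ((z i : ℤ) : ℝ)) := by
    rw [Matrix.mulVec_add]
    have hEqA : (fun i => ((h i : ℤ) : ℝ)) = A.mulVec y := hEq
    have hEqA' : (fun i => (((h + Matrix.mulVec Mᵀ z) i : ℤ) : ℝ)) = A.mulVec y' := hEq'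
    rw [← hEqA', hcast]
    funext i
    rw [Pi.add_apply]
    congr 1
    exact congrFun hEqA i
  have hinj : y' = y + fun i => ((z i : ℤ) : ℝ) := by
    have hu : IsUnit A.det := isUnit_iff_ne_zero.mpr hdetA
    have := congrArg (fun v => A⁻¹.mulVec v) key
    simpa [Matrix.mulVec_mulVec, Matrix.nonsing_inv_mul A hu, Matrix.one_mulVec] using this
  apply hz
  funext i
  have h1 := hy i
  have h2 := hy' i
  rw [hinj] at h2
  obtain ⟨a1, b1⟩ := h1
  obtain ⟨a2, b2⟩ := h2
  simp only [Pi.add_apply] at a2 b2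
  have hr : -1 < (z i : ℝ) ∧ (z i : ℝ) < 1 := ⟨by linarith, by linarith⟩
  have hzint : -1 < z i ∧ z i < 1 := by exact_mod_cast hr
  simp only [Pi.zero_apply]
  omega

end ElastFFTProofAux

/-- for the normalised Dirichlet kernel the periodised Green symbol
coincides with the Green operator symbol on the generating set. -/
theorem gammaPSym_dirichlet_eq_greenSym
    (d : ℕ) (hd : 0 < d)
    (M : Matrix (Fin d) (Fin d) ℤ) (hM : M.det ≠ 0)
    (C0 : Fin d → Fin d → Fin d → Fin d → ℝ)
    (hC0symm : TensorSymm d C0) (hC0pos : TensorPosDef d C0) :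
    ∀ h ∈ genSet d Mᵀ, ∀ E : Matrix (Fin d) (Fin d) ℂ,
      gammaPSym d M C0
        (fun x => ((Real.sqrt (M.det.natAbs) : ℝ) : ℂ)⁻¹ * dirichlet d M x) h E =
      greenSymZ d C0 h E := by
  classical
  intro h hh E
  set m : ℕ := M.det.natAbs with hmdef
  have hmne : m ≠ 0 := Int.natAbs_ne_zero.mpr hM
  have hmR : (0 : ℝ) < (m : ℝ) := by
    exact_mod_cast Nat.pos_of_ne_zero hmne
  have hco : ∀ k : Fin d → ℤ,
      fCoeff d (fun x => ((Real.sqrt (M.det.natAbs) : ℝ) : ℂ)⁻¹ * dirichlet d M x) k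
        = ((Real.sqrt m : ℝ) : ℂ)⁻¹ * (if k ∈ genSet d Mᵀ then 1 else 0) := by
    intro k
    rw [ElastFFTProofAux.fCoeff_const_mul, ElastFFTProofAux.fCoeff_dirichlet]
  have hns : ∀ k : Fin d → ℤ,
      ((Complex.normSq (fCoeff d
        (fun x => ((Real.sqrt (M.det.natAbs) : ℝ) : ℂ)⁻¹ * dirichlet d M x) k) : ℝ) : ℂ)
      = if k ∈ genSet d Mᵀ then (((m : ℝ)⁻¹ : ℝ) : ℂ) else 0 := by
    intro k
    rw [hco k]
    split
    · rw [mul_one, ← Complex.ofReal_inv, Complex.normSq_ofReal]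
      congr 1
      rw [← mul_inv, Real.mul_self_sqrt hmR.le]
    · simp
  unfold gammaPSym
  rw [tsum_eq_single (0 : Fin d → ℤ) ?_]
  · rw [Matrix.mulVec_zero, add_zero, hns h, if_pos hh, smul_smul]
    have hone : ((M.det.natAbs : ℂ)) * (((m : ℝ)⁻¹ : ℝ) : ℂ) = 1 := by
      push_cast
      rw [mul_inv_cancel₀]
      exact_mod_cast ne_of_gt hmR
    rw [hone, one_smul]
  · intro z hz
    rw [hns, if_neg, zero_smul]
    exact ElastFFTProofAux.genSet_add_notMem d M hM hh hz

end ElastFFT
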